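/- Accuracy theorem: let D be an SLD derivation for query G in program P via a local computation rule, and let ≤ be a well-quasi-order. If D is safe with respect to ≤ (every covering-ancestor sequence of a selected atom is admissible), then there exists an ASLD derivation D_S for G in P via a depth-preserving computation rule such that simplify(D_S) = D. -/

import Mathlib

/-! Basic syntax of definite logic programs: first-order terms, atoms,
substitutions, most general unifiers and clauses. -/

abbrev Var := ℕ

inductive Tm : Type
  | var : Var → Tm
  | fn : ℕ → List Tm → Tm

abbrev Subst := Var → Tm

def Tm.subst (σ : Subst) : Tm → Tm
  | .var v => σ v
  | .fn f ts => .fn f (ts.attach.map fun t => Tm.subst σ t.1)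
decreasing_by simp only [Tm.fn.sizeOf_spec]; have := List.sizeOf_lt_of_mem t.2; omega

structure Atom where
  pred : ℕ
  args : List Tm

def Atom.subst (σ : Subst) (A : Atom) : Atom := ⟨A.pred, A.args.map (Tm.subst σ)⟩

/-- The identity substitution. -/
def idS : Subst := Tm.var

/-- Composition of substitutions: `(σ.comp τ) t = τ(σ(t))`. -/
def Subst.comp (σ τ : Subst) : Subst := fun v => Tm.subst τ (σ v)

def Unifies (θ : Subst) (A B : Atom) : Prop := A.subst θ = B.subst θ

/-- `θ` is a most general unifier of atoms `A` and `B`. -/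
def IsMgu (θ : Subst) (A B : Atom) : Prop :=
  Unifies θ A B ∧ ∀ τ, Unifies τ A B → ∃ δ, ∀ v, τ v = Tm.subst δ (θ v)

structure Clause where
  head : Atom
  body : List Atom

/-! ASLD resolution: goals are lists of items, where an item is either the
pop-mark `↑` or an atom annotated (as ghost information) with the list of its
ancestors, nearest ancestor first; ancestors are recorded in the instantiation
state they had when they were selected.  A state pairs a goal with the
ancestor stack (head = top of the stack). -/

inductive GItem : Type
  | pop : GItem
  | atom : Atom → List Atom → GItem

def GItem.isPop : GItem → Bool
  | .pop => true
  | _ => false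

/-- Apply a substitution to the atom of an item (annotations, which are
snapshots, are left untouched). -/
def instG (θ : Subst) : GItem → GItem
  | .pop => .pop
  | .atom A anc => .atom (A.subst θ) anc

structure AState where
  goal : List GItem
  stack : List Atom

/-- `Admissible wqo A AS`: no element of the sequence `AS` is `wqo`-below the
new atom `A`. -/
def Admissible (wqo : Atom → Atom → Prop) (A : Atom) (AS : List Atom) : Prop :=
  ∀ B ∈ AS, ¬ wqo B A

/-- ASLD resolution steps.  **derive** selects (via an arbitrary computation
rule) an atom `A` of the goal, provided the leftmost item of the goal is not a
`↑` mark and `A` is admissible w.r.t. the contents of the ancestor stack;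
it replaces the goal by the instantiated clause body placed at the front,
followed by a `↑` mark and the instantiated remaining atoms, and pushes `A`
onto the stack.  **popDerive** applies when the leftmost item is `↑`: it
removes the mark and pops the stack. -/
inductive AStep (P : List Clause) (wqo : Atom → Atom → Prop) : AState → AState → Prop
  | derive (pre post : List GItem) (A : Atom) (anc : List Atom) (C : Clause)
      (θ : Subst) (AS : List Atom)
      (hC : C ∈ P) (hmgu : IsMgu θ A C.head)
      (hleft : (pre ++ GItem.atom A anc :: post).head? ≠ some GItem.pop)
      (hadm : Admissible wqo A AS) :
      AStep P wqo ⟨pre ++ GItem.atom A anc :: post, AS⟩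
        ⟨(C.body.map fun B => GItem.atom (B.subst θ) (A :: anc)) ++
            GItem.pop :: (pre ++ post).map (instG θ), A :: AS⟩
  | popDerive (G : List GItem) (T : Atom) (AS : List Atom) :
      AStep P wqo ⟨GItem.pop :: G, T :: AS⟩ ⟨G, AS⟩

/-- The initial ASLD state for a query `Q`: all atoms have an empty ancestor
annotation and the stack is empty. -/
def initState (Q : List Atom) : AState :=
  ⟨Q.map fun A => GItem.atom A [], []⟩

/-- SLD goals with ghost ancestor annotations: each atom carries the list of
its ancestors (nearest first), in the instantiation state they had when they
were selected. -/
abbrev SGoal := List (Atom × List Atom)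

def instA (θ : Subst) (x : Atom × List Atom) : Atom × List Atom :=
  (x.1.subst θ, x.2)

/-- Safe SLD resolution steps (front placement) via a local computation rule:
the selected atom has maximal ancestor depth in the goal, and its covering
ancestor sequence is admissible w.r.t. the wqo. -/
inductive SafeLocalStep (P : List Clause) (wqo : Atom → Atom → Prop) : SGoal → SGoal → Prop
  | step (pre post : SGoal) (A : Atom) (anc : List Atom) (C : Clause) (θ : Subst)
      (hC : C ∈ P) (hmgu : IsMgu θ A C.head)
      (hlocal : ∀ x ∈ pre ++ post, x.2.length ≤ anc.length)
      (hsafe : Admissible wqo A anc) :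
      SafeLocalStep P wqo (pre ++ (A, anc) :: post)
        ((C.body.map fun B => (B.subst θ, A :: anc)) ++ (pre ++ post).map (instA θ))

/-- The derive rule of ASLD resolution restricted to depth-preserving
computation rules (the selected atom lies strictly left of the leftmost `↑`). -/
inductive ADeriveDP (P : List Clause) (wqo : Atom → Atom → Prop) : AState → AState → Prop
  | derive (pre post : List GItem) (A : Atom) (anc : List Atom) (C : Clause)
      (θ : Subst) (AS : List Atom)
      (hC : C ∈ P) (hmgu : IsMgu θ A C.head)
      (hdp : GItem.pop ∉ pre)
      (hadm : Admissible wqo A AS) :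
      ADeriveDP P wqo ⟨pre ++ GItem.atom A anc :: post, AS⟩
        ⟨(C.body.map fun B => GItem.atom (B.subst θ) (A :: anc)) ++
            GItem.pop :: (pre ++ post).map (instG θ), A :: AS⟩

/-- The pop-derive rule of ASLD resolution. -/
inductive APop : AState → AState → Prop
  | popDerive (G : List GItem) (T : Atom) (AS : List Atom) :
      APop ⟨GItem.pop :: G, T :: AS⟩ ⟨G, AS⟩

/-- Erasing the `↑` marks of an ASLD goal yields an (annotated) SLD goal. -/
def eraseG (G : List GItem) : SGoal :=
  G.filterMap fun i =>
    match i with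
    | GItem.pop => none
    | GItem.atom A anc => some (A, anc)

/-- `Corr l gs`: the list of states `l` is an ASLD derivation (via
depth-preserving derive and pop-derive steps) whose simplification — obtained
by performing the same derive steps and ignoring the pop-derive steps and the
`↑` atoms — is exactly the SLD goal sequence `gs`; i.e. `simplify(l) = gs`. -/
inductive Corr (P : List Clause) (wqo : Atom → Atom → Prop) :
    List AState → List SGoal → Prop
  | base (s : AState) : Corr P wqo [s] [eraseG s.goal]
  | pop (s s' : AState) (l : List AState) (gs : List SGoal) :
      APop s s' → Corr P wqo (s' :: l) gs → Corr P wqo (s :: s' :: l) gs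
  | derive (s s' : AState) (l : List AState) (gs : List SGoal) :
      ADeriveDP P wqo s s' → Corr P wqo (s' :: l) gs →
      Corr P wqo (s :: s' :: l) (eraseG s.goal :: gs)

/-! Auxiliary machinery for the accuracy theorem. -/

@[simp] lemma eraseG_nil : eraseG [] = [] := rfl
@[simp] lemma eraseG_pop_cons (G : List GItem) : eraseG (GItem.pop :: G) = eraseG G := rfl
@[simp] lemma eraseG_atom_cons (A : Atom) (anc : List Atom) (G : List GItem) :
    eraseG (GItem.atom A anc :: G) = (A, anc) :: eraseG G := rfl
@[simp] lemma eraseG_append (G1 G2 : List GItem) :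
    eraseG (G1 ++ G2) = eraseG G1 ++ eraseG G2 := List.filterMap_append ..

@[simp] lemma eraseG_replicate_pop (n : ℕ) : eraseG (List.replicate n GItem.pop) = [] := by
  induction n with
  | zero => rfl
  | succ n ih => simp [List.replicate_succ, ih]

lemma eraseG_map_instG (θ : Subst) (G : List GItem) :
    eraseG (G.map (instG θ)) = (eraseG G).map (instA θ) := by
  induction G with
  | nil => rfl
  | cons i G ih => cases i <;> simp [instG, instA, ih]

lemma eraseG_map_atoms (l : List Atom) (f : Atom → Atom) (anc : List Atom) :
    eraseG (l.map fun B => GItem.atom (f B) anc) = l.map fun B => (f B, anc) := by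
  induction l with
  | nil => rfl
  | cons B l ih => simp [ih]

/-- Structural invariant of reachable ASLD states: the atoms before the first
`↑` carry exactly the stack as annotation, and after each `↑` the stack loses
its top. -/
def StInv : List GItem → List Atom → Prop
  | [], AS => AS = []
  | GItem.pop :: G, AS => ∃ T AS', AS = T :: AS' ∧ StInv G AS'
  | GItem.atom _ anc :: G, AS => anc = AS ∧ StInv G AS

lemma inv_mem {G : List GItem} {AS : List Atom} (h : StInv G AS) {A : Atom} {anc : List Atom}
    (hm : (A, anc) ∈ eraseG G) : ∃ k, anc = AS.drop k := by
  induction G generalizing AS with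
  | nil => simp at hm
  | cons i G ih =>
    cases i with
    | pop =>
      obtain ⟨T, AS', rfl, h'⟩ := h
      obtain ⟨k, hk⟩ := ih h' (by simpa using hm)
      exact ⟨k + 1, by simp [hk]⟩
    | atom B banc =>
      obtain ⟨rfl, h'⟩ := h
      simp only [eraseG_atom_cons, List.mem_cons, Prod.mk.injEq] at hm
      rcases hm with ⟨rfl, rfl⟩ | hm
      · exact ⟨0, rfl⟩
      · exact ih h' hm

lemma inv_find {G : List GItem} {AS : List Atom} (hInv : StInv G AS) {pre post : SGoal}
    {A : Atom} {anc : List Atom}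
    (hsplit : eraseG G = pre ++ (A, anc) :: post)
    (hloc : ∀ x ∈ pre ++ post, x.2.length ≤ anc.length) :
    ∃ (Ts : List Atom) (preG postG : List GItem),
      G = List.replicate Ts.length GItem.pop ++ (preG ++ GItem.atom A anc :: postG) ∧
      AS = Ts ++ anc ∧ GItem.pop ∉ preG ∧ eraseG preG = pre ∧ eraseG postG = post := by
  induction G generalizing AS pre with
  | nil => simp at hsplit
  | cons i G ih =>
    cases i with
    | pop =>
      obtain ⟨T, AS', rfl, h'⟩ := hInv
      rw [eraseG_pop_cons] at hsplit
      obtain ⟨Ts, preG, postG, hG, hAS, hnp, hpre, hpost⟩ := ih h' hsplit hloc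
      exact ⟨T :: Ts, preG, postG, by simp [hG, List.replicate_succ],
        by simp [hAS], hnp, hpre, hpost⟩
    | atom B banc =>
      obtain ⟨rfl, h'⟩ := hInv
      rw [eraseG_atom_cons] at hsplit
      cases pre with
      | nil =>
        simp only [List.nil_append, List.cons.injEq, Prod.mk.injEq] at hsplit
        obtain ⟨⟨rfl, rfl⟩, hpost⟩ := hsplit
        exact ⟨[], [], G, by simp, by simp, by simp, rfl, hpost⟩
      | cons p pre' =>
        simp only [List.cons_append, List.cons.injEq] at hsplit
        obtain ⟨rfl, hsplit⟩ := hsplit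
        have hmem : (A, anc) ∈ eraseG G := by rw [hsplit]; simp
        obtain ⟨k, hk⟩ := inv_mem h' hmem
        have hlen : banc.length ≤ anc.length := hloc (B, banc) (by simp)
        have hanc : anc = banc := by
          rw [hk]
          rw [hk, List.length_drop] at hlen
          rcases Nat.eq_zero_or_pos banc.length with h0 | h0
          · rw [List.drop_eq_nil_of_le (by omega)]
            exact (List.eq_nil_of_length_eq_zero h0).symm
          · have : k = 0 := by omega
            simp [this]
        subst hanc
        obtain ⟨Ts, preG, postG, hG, hAS, hnp, hpre, hpost⟩ :=
          ih h' hsplit (fun x hx => hloc x (by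
            simp only [List.mem_append, List.mem_cons] at hx ⊢; tauto))
        have hTs : Ts = [] := by
          have := congrArg List.length hAS
          simp only [List.length_append] at this
          exact List.eq_nil_of_length_eq_zero (by omega)
        subst hTs
        simp only [List.length_nil, List.replicate_zero, List.nil_append] at hG
        exact ⟨[], GItem.atom B anc :: preG, postG, by simp [hG], by simp,
          by simp [hnp], by simp [hpre], hpost⟩

lemma inv_strip (Ts : List Atom) {G : List GItem} {AS : List Atom}
    (h : StInv (List.replicate Ts.length GItem.pop ++ G) (Ts ++ AS)) : StInv G AS := by
  induction Ts with
  | nil => simpa using h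
  | cons T Ts ih =>
    rw [List.length_cons, List.replicate_succ, List.cons_append] at h
    obtain ⟨T', AS', hEq, h'⟩ := h
    injection hEq with h1 h2
    subst h2
    exact ih h'

lemma inv_remove (preG : List GItem) {A : Atom} {anc : List Atom} {X : List GItem} :
    GItem.pop ∉ preG → ∀ AS, StInv (preG ++ GItem.atom A anc :: X) AS → StInv (preG ++ X) AS := by
  induction preG with
  | nil => exact fun _ AS h => h.2
  | cons i preG ih =>
    intro hnp AS h
    cases i with
    | pop => exact absurd (List.mem_cons_self) hnp
    | atom B banc =>
      obtain ⟨rfl, h'⟩ := h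
      exact ⟨rfl, ih (fun hm => hnp (List.mem_cons_of_mem _ hm)) _ h'⟩

lemma inv_instG (θ : Subst) (G : List GItem) : ∀ AS, StInv G AS → StInv (G.map (instG θ)) AS := by
  induction G with
  | nil => intro AS h; simpa using h
  | cons i G ih =>
    intro AS h
    cases i with
    | pop =>
      obtain ⟨T, AS', rfl, h'⟩ := h
      exact ⟨T, AS', rfl, ih _ h'⟩
    | atom B banc =>
      obtain ⟨rfl, h'⟩ := h
      exact ⟨rfl, ih _ h'⟩

lemma inv_body (bs : List Atom) (f : Atom → Atom) (T : Atom) (AS : List Atom)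
    (rest : List GItem) (h : StInv rest AS) :
    StInv ((bs.map fun B => GItem.atom (f B) (T :: AS)) ++ GItem.pop :: rest) (T :: AS) := by
  induction bs with
  | nil => exact ⟨T, AS, rfl, h⟩
  | cons B bs ih => exact ⟨rfl, ih⟩

lemma pops_corr (P : List Clause) (wqo : Atom → Atom → Prop) (Ts : List Atom)
    (G : List GItem) (AS : List Atom) (l : List AState) (gs : List SGoal)
    (h : Corr P wqo (AState.mk G AS :: l) gs) :
    ∃ l', Corr P wqo
      (AState.mk (List.replicate Ts.length GItem.pop ++ G) (Ts ++ AS) :: l') gs := by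
  induction Ts with
  | nil => exact ⟨l, by simpa using h⟩
  | cons T Ts ih =>
    obtain ⟨l', h'⟩ := ih
    refine ⟨AState.mk (List.replicate Ts.length GItem.pop ++ G) (Ts ++ AS) :: l', ?_⟩
    have := Corr.pop (P := P) (wqo := wqo)
      ⟨GItem.pop :: (List.replicate Ts.length GItem.pop ++ G), T :: (Ts ++ AS)⟩
      _ l' gs (APop.popDerive _ _ _) h'
    simpa [List.replicate_succ] using this

lemma safeLocalStep_inv {P : List Clause} {wqo : Atom → Atom → Prop} {G1 G2 : SGoal}
    (h : SafeLocalStep P wqo G1 G2) :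
    ∃ pre post A anc C θ, C ∈ P ∧ IsMgu θ A C.head ∧
      (∀ x ∈ pre ++ post, x.2.length ≤ anc.length) ∧ Admissible wqo A anc ∧
      G1 = pre ++ (A, anc) :: post ∧
      G2 = (C.body.map fun B => (B.subst θ, A :: anc)) ++ (pre ++ post).map (instA θ) := by
  cases h with
  | step pre post A anc C θ hC hmgu hlocal hsafe =>
    exact ⟨pre, post, A, anc, C, θ, hC, hmgu, hlocal, hsafe, rfl, rfl⟩

lemma eraseG_init (Q : List Atom) :
    eraseG (Q.map fun A => GItem.atom A []) = Q.map fun A => (A, ([] : List Atom)) := by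
  induction Q with
  | nil => rfl
  | cons B Q ih => simp [ih]

lemma stInv_init (Q : List Atom) : StInv (Q.map fun A => GItem.atom A []) [] := by
  induction Q with
  | nil => trivial
  | cons B Q ih => exact ⟨rfl, ih⟩

lemma accuracy_main (P : List Clause) (wqo : Atom → Atom → Prop) :
    ∀ (gs : List SGoal) (G : List GItem) (AS : List Atom), StInv G AS →
      List.Chain' (SafeLocalStep P wqo) (eraseG G :: gs) →
      ∃ l, Corr P wqo (AState.mk G AS :: l) (eraseG G :: gs) := by
  intro gs
  induction gs with
  | nil => exact fun G AS _ _ => ⟨[], Corr.base ⟨G, AS⟩⟩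
  | cons g gs ih =>
    intro G AS hInv hchain
    rw [List.Chain', List.isChain_cons_cons] at hchain
    obtain ⟨hstep, hchain⟩ := hchain
    obtain ⟨pre, post, A, anc, C, θ, hC, hmgu, hlocal, hsafe, hEG, hg⟩ := safeLocalStep_inv hstep
    obtain ⟨Ts, preG, postG, hG, hAS, hnp, hpre, hpost⟩ := inv_find hInv hEG hlocal
    subst hG hAS hg
    subst hpre hpost
    have hInvMid : StInv (preG ++ GItem.atom A anc :: postG) anc := inv_strip Ts hInv
    set newGoal : List GItem :=
      (C.body.map fun B => GItem.atom (B.subst θ) (A :: anc)) ++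
        GItem.pop :: (preG ++ postG).map (instG θ) with hnewGoal
    have hInvNew : StInv newGoal (A :: anc) :=
      inv_body _ _ _ _ _ (inv_instG θ _ anc (inv_remove preG hnp anc hInvMid))
    have hEraseNew : eraseG newGoal =
        (C.body.map fun B => (B.subst θ, A :: anc)) ++
          (eraseG preG ++ eraseG postG).map (instA θ) := by
      simp [hnewGoal, eraseG_map_instG, eraseG_map_atoms]
    obtain ⟨l, hl⟩ := ih newGoal (A :: anc) hInvNew (by rw [hEraseNew]; exact hchain)
    have hder : ADeriveDP P wqo ⟨preG ++ GItem.atom A anc :: postG, anc⟩ ⟨newGoal, A :: anc⟩ :=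
      ADeriveDP.derive preG postG A anc C θ anc hC hmgu hnp hsafe
    have hcorr := Corr.derive _ _ l _ hder hl
    obtain ⟨l', hl'⟩ := pops_corr P wqo Ts _ anc _ _ hcorr
    refine ⟨l', ?_⟩
    rw [hEraseNew] at hl'
    simpa using hl'

/-- Accuracy: if `D` is an SLD derivation for query `Q` in program `P` via a
local computation rule which is safe w.r.t. the wqo (every covering-ancestor
sequence of a selected atom is admissible), then there exists an ASLD
derivation `D_S` for `Q` in `P` via a depth-preserving computation rule such
that `simplify(D_S) = D`. -/
theorem accuracy (P : List Clause) (wqo : Atom → Atom → Prop) (Q : List Atom)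
    (gs : List SGoal)
    (hhead : gs.head? = some (Q.map fun A => (A, ([] : List Atom))))
    (hchain : List.Chain' (SafeLocalStep P wqo) gs) :
    ∃ l : List AState, l.head? = some (initState Q) ∧ Corr P wqo l gs := by
  cases gs with
  | nil => simp at hhead
  | cons g gs' =>
    simp only [List.head?, Option.some.injEq] at hhead
    subst hhead
    have hInit := eraseG_init Q
    obtain ⟨l, hl⟩ := accuracy_main P wqo gs' (Q.map fun A => GItem.atom A []) [] (stInv_init Q)
      (by rw [hInit]; exact hchain)
    refine ⟨⟨Q.map fun A => GItem.atom A [], []⟩ :: l, rfl, ?_⟩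
    rw [hInit] at hl
    exact hl
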